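/- Let μ > 0 and ω > 0. The functions x ↦ ∂φ_ω/∂ω(x) and x ↦ φ_ω'(x) are linearly independent on (0, ∞), where φ_ω(x) = [(μ+1)ω]^{1/(2μ)} sech^{1/μ}(μ√ω x). -/

import Mathlib

open Real

/-- The soliton profile `φ_ω(x) = ((μ+1)ω)^(1/(2μ)) sech^(1/μ)(μ√ω x)`. -/
noncomputable def phi (μ ω : ℝ) (x : ℝ) : ℝ :=
  ((μ + 1) * ω) ^ (1 / (2 * μ)) * Real.cosh (μ * Real.sqrt ω * x) ^ (-(1 / μ))

lemma phi_pos {μ ω : ℝ} (hμ : 0 < μ) (hω : 0 < ω) (x : ℝ) : 0 < phi μ ω x := by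
  have h1 : (0:ℝ) < (μ + 1) * ω := by positivity
  exact mul_pos (Real.rpow_pos_of_pos h1 _) (Real.rpow_pos_of_pos (Real.cosh_pos _) _)

lemma hasDerivAt_phi_x (μ ω : ℝ) (hμ : 0 < μ) (x : ℝ) :
    HasDerivAt (phi μ ω)
      (phi μ ω x * (-(Real.sqrt ω) * Real.tanh (μ * Real.sqrt ω * x))) x := by
  have hc : Real.cosh (μ * Real.sqrt ω * x) ≠ 0 := (Real.cosh_pos _).ne'
  have h1 : HasDerivAt (fun y : ℝ => μ * Real.sqrt ω * y) (μ * Real.sqrt ω) x := by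
    simpa using (hasDerivAt_id x).const_mul (μ * Real.sqrt ω)
  have h2 : HasDerivAt (fun y : ℝ => Real.cosh (μ * Real.sqrt ω * y))
      (Real.sinh (μ * Real.sqrt ω * x) * (μ * Real.sqrt ω)) x :=
    (Real.hasDerivAt_cosh _).comp x h1
  have h3 : HasDerivAt (fun y : ℝ => Real.cosh (μ * Real.sqrt ω * y) ^ (-(1 / μ)))
      (-(1 / μ) * Real.cosh (μ * Real.sqrt ω * x) ^ (-(1 / μ) - 1) *
        (Real.sinh (μ * Real.sqrt ω * x) * (μ * Real.sqrt ω))) x :=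
    by have := (Real.hasDerivAt_rpow_const (p := -(1 / μ)) (Or.inl hc)).comp x h2; exact this
  have h4 := h3.const_mul (((μ + 1) * ω) ^ (1 / (2 * μ)))
  convert h4 using 1
  · rfl
  · rfl
  · rfl
  unfold phi
  rw [Real.rpow_sub_one hc, Real.tanh_eq_sinh_div_cosh]
  field_simp

lemma hasDerivAt_phi_omega (μ ω : ℝ) (hμ : 0 < μ) (hω : 0 < ω) (x : ℝ) :
    HasDerivAt (fun σ => phi μ σ x)
      (phi μ ω x * (1 / (2 * μ * ω)
        - Real.tanh (μ * Real.sqrt ω * x) * (x / (2 * Real.sqrt ω)))) ω := by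
  have hbase : (μ + 1) * ω ≠ 0 := by positivity
  have hc : Real.cosh (μ * Real.sqrt ω * x) ≠ 0 := (Real.cosh_pos _).ne'
  have hsq : Real.sqrt ω ≠ 0 := (Real.sqrt_pos.mpr hω).ne'
  have hsq2 : Real.sqrt ω * Real.sqrt ω = ω := Real.mul_self_sqrt hω.le
  have h1 : HasDerivAt (fun σ : ℝ => (μ + 1) * σ) (μ + 1) ω := by
    simpa using (hasDerivAt_id ω).const_mul (μ + 1)
  have h2 : HasDerivAt (fun σ : ℝ => ((μ + 1) * σ) ^ (1 / (2 * μ)))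
      (1 / (2 * μ) * ((μ + 1) * ω) ^ (1 / (2 * μ) - 1) * (μ + 1)) ω :=
    (Real.hasDerivAt_rpow_const (Or.inl hbase)).comp ω h1
  have h3 : HasDerivAt (fun σ : ℝ => μ * Real.sqrt σ * x)
      (μ * (1 / (2 * Real.sqrt ω)) * x) ω :=
    ((Real.hasDerivAt_sqrt hω.ne').const_mul μ).mul_const x
  have h4 : HasDerivAt (fun σ : ℝ => Real.cosh (μ * Real.sqrt σ * x))
      (Real.sinh (μ * Real.sqrt ω * x) * (μ * (1 / (2 * Real.sqrt ω)) * x)) ω :=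
    (Real.hasDerivAt_cosh _).comp ω h3
  have h5 : HasDerivAt (fun σ : ℝ => Real.cosh (μ * Real.sqrt σ * x) ^ (-(1 / μ)))
      (-(1 / μ) * Real.cosh (μ * Real.sqrt ω * x) ^ (-(1 / μ) - 1) *
        (Real.sinh (μ * Real.sqrt ω * x) * (μ * (1 / (2 * Real.sqrt ω)) * x))) ω :=
    by have := (Real.hasDerivAt_rpow_const (p := -(1 / μ)) (Or.inl hc)).comp ω h4; exact this
  have h6 := h2.mul h5
  convert h6 using 1
  · rfl
  · rfl
  · rfl
  unfold phi
  rw [Real.rpow_sub_one hbase, Real.rpow_sub_one hc, Real.tanh_eq_sinh_div_cosh]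
  have hμ1 : (μ:ℝ) + 1 ≠ 0 := by positivity
  field_simp
  nlinarith [hsq2, sq_nonneg (Real.sqrt ω)]

/-- The partial derivative in `ω` of the soliton and its spatial derivative are linearly
independent on `(0, ∞)`. -/
theorem soliton_derivatives_linearly_independent (μ ω : ℝ) (hμ : 0 < μ) (hω : 0 < ω) :
    ∀ a b : ℝ,
      (∀ x ∈ Set.Ioi (0:ℝ),
        a * deriv (fun σ => phi μ σ x) ω + b * deriv (phi μ ω) x = 0) →
      a = 0 ∧ b = 0 := by
  intro a b h
  have hsq : 0 < Real.sqrt ω := Real.sqrt_pos.mpr hω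
  set s := μ * Real.sqrt ω with hs
  have hspos : 0 < s := mul_pos hμ hsq
  set t1 := Real.tanh s with ht1
  set t2 := Real.tanh (2 * s) with ht2
  have hcosh1 : 0 < Real.cosh s := Real.cosh_pos _
  have hcosh2 : 0 < Real.cosh (2 * s) := Real.cosh_pos _
  have hsinh1 : 0 < Real.sinh s := Real.sinh_pos_iff.mpr hspos
  have ht1pos : 0 < t1 := by
    rw [ht1, Real.tanh_eq_sinh_div_cosh]; positivity
  have ht12 : t1 < t2 := by
    rw [ht1, ht2, Real.tanh_eq_sinh_div_cosh, Real.tanh_eq_sinh_div_cosh,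
      div_lt_div_iff₀ hcosh1 hcosh2]
    have hd := Real.sinh_sub (2 * s) s
    have h2s : 2 * s - s = s := by ring
    rw [h2s] at hd
    nlinarith [hsinh1]
  have ht2pos : 0 < t2 := ht1pos.trans ht12
  have key : ∀ x : ℝ, 0 < x →
      a * (1 / (2 * μ * ω) - Real.tanh (s * x) * (x / (2 * Real.sqrt ω)))
        + b * (-(Real.sqrt ω) * Real.tanh (s * x)) = 0 := by
    intro x hx
    have hd1 := (hasDerivAt_phi_omega μ ω hμ hω x).deriv
    have hd2 := (hasDerivAt_phi_x μ ω hμ x).deriv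
    have h0 := h x hx
    rw [hd1, hd2] at h0
    have hp := phi_pos hμ hω x
    have hfac : phi μ ω x *
        (a * (1 / (2 * μ * ω) - Real.tanh (s * x) * (x / (2 * Real.sqrt ω)))
          + b * (-(Real.sqrt ω) * Real.tanh (s * x))) = 0 := by
      rw [← h0]; ring
    exact (mul_eq_zero.mp hfac).resolve_left hp.ne'
  have e1 := key 1 one_pos
  have e2 := key 2 two_pos
  rw [mul_one] at e1
  rw [mul_comm s 2] at e2
  have comb : a * ((t2 - t1) * (1 / (2 * μ * ω)) + t1 * t2 * (1 / (2 * Real.sqrt ω))) = 0 := by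
    linear_combination t2 * e1 - t1 * e2
  have ha : a = 0 := by
    have hpos : 0 < (t2 - t1) * (1 / (2 * μ * ω)) + t1 * t2 * (1 / (2 * Real.sqrt ω)) := by
      have hdt : 0 < t2 - t1 := sub_pos.mpr ht12
      positivity
    exact (mul_eq_zero.mp comb).resolve_right hpos.ne'
  refine ⟨ha, ?_⟩
  rw [ha] at e1
  have hb : b * (Real.sqrt ω * t1) = 0 := by linear_combination -e1
  have hpos : 0 < Real.sqrt ω * t1 := by positivity
  exact (mul_eq_zero.mp hb).resolve_right hpos.ne'
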